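/- Let n ≥ 2, let 1 < α < 2, let κ : [-1,1] → [0,∞) be measurable with ∫_{S^{n-1}} κ(v·v') dv = 1 for each v' ∈ S^{n-1}, and let p be a path-length density with tail exponent α and coefficient d₀ > 0. With the scaling θ(ε) = ε^α, the quantity Λ_ε(ξ,v') = ∫_{S^{n-1}} ∫₀^∞ κ(v'·v) p(s) (cos(ε (v·ξ) s) − 1)/θ(ε) ds dv satisfies |Λ_ε(ξ,v')| ≤ c₀ |ξ|^α for all ε ∈ (0,1), all ξ ∈ ℝⁿ, and all v' ∈ S^{n-1}, for a constant c₀ > 0 independent of ε, ξ, v' (one may take c₀ = 1/2 + 2 d₀/α + d₀/(2(2−α)) + 1/2, or any constant of this form depending only on α and d₀). -/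

import Mathlib

open MeasureTheory Metric Filter Set
open scoped ENNReal

noncomputable section

/-- Euclidean space `ℝⁿ`. -/
abbrev Euc (n : ℕ) := EuclideanSpace ℝ (Fin n)

/-- The unit sphere `S^{n-1}` in `ℝⁿ`. -/
abbrev Sph (n : ℕ) := Metric.sphere (0 : Euc n) 1

/-- The normalized surface measure on the unit sphere (total mass `1`): the surface
measure divided by its total mass. -/
noncomputable def sphμ (n : ℕ) : Measure (Sph n) :=
  ((volume : Measure (Euc n)).toSphere Set.univ)⁻¹ • (volume : Measure (Euc n)).toSphere

/-- A path-length density: measurable, nonnegative, integrating to one on `(0,∞)`, with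
finite first moment. -/
def IsPathDensity (p : ℝ → ℝ) : Prop :=
  Measurable p ∧ (∀ s, 0 ≤ p s) ∧ (∫ s in Set.Ioi (0 : ℝ), p s = 1) ∧
    IntegrableOn (fun s => s * p s) (Set.Ioi (0 : ℝ))

/-- A normalized nonnegative angular kernel `κ` on `[-1,1]`:
`∫_{S^{n-1}} κ(v·v') dv = 1` for every `v'`. -/
def IsAngularKernel (n : ℕ) (κ : ℝ → ℝ) : Prop :=
  Measurable κ ∧ (∀ μ ∈ Set.Icc (-1 : ℝ) 1, 0 ≤ κ μ) ∧
    ∀ v' : Sph n, ∫ v, κ (inner ℝ (v : Euc n) (v' : Euc n)) ∂(sphμ n) = 1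

/-- The path-length density `p` has tail exponent `α` with coefficient `d₀`:
`p(s) = d₀ s^{−(α+1)}` for all `s > 1`. -/
def HasTailExponent (p : ℝ → ℝ) (α d₀ : ℝ) : Prop :=
  ∀ s : ℝ, 1 < s → p s = d₀ / s ^ (α + 1)

lemma my_cos_le_two (x : ℝ) : |Real.cos x - 1| ≤ 2 := by
  rw [abs_sub_le_iff]
  constructor <;> nlinarith [Real.cos_le_one x, Real.neg_one_le_cos x]

lemma my_cos_le_sq (x : ℝ) : |Real.cos x - 1| ≤ x ^ 2 / 2 := by
  have h1 : Real.cos (x/2) ^ 2 = 1/2 + Real.cos (2*(x/2)) / 2 := Real.cos_sq (x/2)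
  have h2 : Real.sin (x/2) ^ 2 + Real.cos (x/2) ^ 2 = 1 := Real.sin_sq_add_cos_sq _
  have h3 : |Real.sin (x/2)| ≤ |x/2| := Real.abs_sin_le_abs
  have h4 : Real.sin (x/2) ^ 2 ≤ (x/2) ^ 2 := by
    rw [← sq_abs, ← sq_abs (x/2)]; exact pow_le_pow_left₀ (abs_nonneg _) h3 2
  have hx : 2*(x/2) = x := by ring
  rw [hx] at h1
  have h5 : Real.cos x ≤ 1 := Real.cos_le_one x
  rw [abs_sub_le_iff]
  constructor <;> nlinarith

lemma my_integrableOn_of_ne {f : ℝ → ℝ} {S : Set ℝ} (h : (∫ s in S, f s) ≠ 0) :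
    IntegrableOn f S := by
  by_contra h'
  exact h (integral_undef h')

set_option maxHeartbeats 1000000 in
lemma J_bound (α d₀ : ℝ) (hα1 : 1 < α) (hα2 : α < 2) (hd₀ : 0 < d₀)
    (p : ℝ → ℝ) (hp : IsPathDensity p) (htail : HasTailExponent p α d₀)
    (ε b L : ℝ) (hε : 0 < ε) (hε1 : ε < 1) (hb : |b| ≤ L) (hL : 0 < L) :
    |∫ s in Ioi (0:ℝ), p s * (Real.cos (ε * b * s) - 1) / ε ^ α| ≤
      ((∫ s in Ioi (0:ℝ), s * p s) / 2 + 2 + (2*d₀/α + d₀/(2*(2-α)))) * L ^ α := by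
  obtain ⟨hpm, hpnn, hpint, hpmom⟩ := hp
  set M : ℝ := ∫ s in Ioi (0:ℝ), s * p s with hM_def
  have hεα : 0 < ε ^ α := Real.rpow_pos_of_pos hε α
  have hLα : 0 < L ^ α := Real.rpow_pos_of_pos hL α
  have hpInt : IntegrableOn p (Ioi (0:ℝ)) := my_integrableOn_of_ne (by rw [hpint]; norm_num)
  set f : ℝ → ℝ := fun s => p s * (Real.cos (ε * b * s) - 1) / ε ^ α with hf_def
  have hfm : Measurable f := by
    apply Measurable.div_const
    exact hpm.mul ((Real.measurable_cos.comp (measurable_id.const_mul (ε*b))).sub measurable_const)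
  have habs : ∀ (S : Set ℝ) (g : ℝ → ℝ), |∫ s in S, g s| ≤ ∫ s in S, |g s| := fun S g => by
    simpa [Real.norm_eq_abs] using norm_integral_le_integral_norm (μ := volume.restrict S) g
  have hfabs : ∀ s, |f s| = p s * |Real.cos (ε * b * s) - 1| / ε ^ α := by
    intro s
    rw [hf_def, abs_div, abs_mul, abs_of_nonneg (hpnn s), abs_of_pos hεα]
  have hfle2 : ∀ s, |f s| ≤ 2 / ε ^ α * p s := by
    intro s
    rw [hfabs s]
    calc p s * |Real.cos (ε * b * s) - 1| / ε ^ α ≤ p s * 2 / ε ^ α := by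
          gcongr
          exacts [hpnn s, my_cos_le_two _]
      _ = 2 / ε ^ α * p s := by ring
  have hfint : IntegrableOn f (Ioi (0:ℝ)) := by
    apply Integrable.mono' (hpInt.const_mul (2 / ε ^ α)) hfm.aestronglyMeasurable.restrict
    exact Filter.Eventually.of_forall fun s => by rw [Real.norm_eq_abs]; exact hfle2 s
  have h01 : IntegrableOn f (Ioc (0:ℝ) 1) := hfint.mono_set Ioc_subset_Ioi_self
  have h1i : IntegrableOn f (Ioi (1:ℝ)) := hfint.mono_set (Ioi_subset_Ioi zero_le_one)
  have hMnn : 0 ≤ M := setIntegral_nonneg measurableSet_Ioi fun s hs => mul_nonneg (le_of_lt hs) (hpnn s)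
  have hone : 1 < ε * L → (1:ℝ) ≤ ε ^ α * L ^ α := by
    intro hu
    rw [← Real.mul_rpow hε.le hL.le]
    calc (1:ℝ) = 1 ^ α := (Real.one_rpow α).symm
      _ ≤ (ε * L) ^ α := Real.rpow_le_rpow zero_le_one hu.le (by linarith)
  -- Bound on (0,1]
  have hJ1 : |∫ s in Ioc (0:ℝ) 1, f s| ≤ (M / 2 + 2) * L ^ α := by
    rcases le_or_gt (ε * L) 1 with hu | hu
    · have key : ε ^ 2 * L ^ 2 ≤ ε ^ α * L ^ α := by
        have h1 : ε ^ 2 * L ^ 2 = (ε * L) ^ (2:ℝ) := by rw [Real.rpow_two]; ring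
        have h2 : ε ^ α * L ^ α = (ε * L) ^ α := (Real.mul_rpow hε.le hL.le).symm
        rw [h1, h2]
        exact Real.rpow_le_rpow_of_exponent_ge (mul_pos hε hL) hu (by linarith)
      have hpt : ∀ s ∈ Ioc (0:ℝ) 1, |f s| ≤ ε ^ 2 * L ^ 2 / (2 * ε ^ α) * (s * p s) := by
        intro s hs
        obtain ⟨hs0, hs1⟩ := hs
        have hb2 : b ^ 2 ≤ L ^ 2 := by nlinarith [sq_abs b, abs_nonneg b]
        have hcb : |Real.cos (ε * b * s) - 1| ≤ ε ^ 2 * L ^ 2 * s / 2 := by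
          refine le_trans (my_cos_le_sq _) ?_
          have hss : s ^ 2 ≤ s := by nlinarith
          have h1 : b ^ 2 * s ^ 2 ≤ L ^ 2 * s := by nlinarith [sq_nonneg s, sq_nonneg L, sq_nonneg b]
          have h2 : ε ^ 2 * (b ^ 2 * s ^ 2) ≤ ε ^ 2 * (L ^ 2 * s) :=
            mul_le_mul_of_nonneg_left h1 (sq_nonneg ε)
          nlinarith
        rw [hfabs s]
        calc p s * |Real.cos (ε * b * s) - 1| / ε ^ α ≤ p s * (ε ^ 2 * L ^ 2 * s / 2) / ε ^ α := by
              gcongr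
              exact hpnn s
          _ = ε ^ 2 * L ^ 2 / (2 * ε ^ α) * (s * p s) := by field_simp
      have hmom01 : IntegrableOn (fun s => s * p s) (Ioc (0:ℝ) 1) := hpmom.mono_set Ioc_subset_Ioi_self
      have step : (∫ s in Ioc (0:ℝ) 1, |f s|) ≤ ε ^ 2 * L ^ 2 / (2 * ε ^ α) * ∫ s in Ioc (0:ℝ) 1, s * p s := by
        rw [← integral_const_mul]
        exact setIntegral_mono_on h01.abs (hmom01.const_mul _) measurableSet_Ioc hpt
      have step2 : (∫ s in Ioc (0:ℝ) 1, s * p s) ≤ M := by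
        apply setIntegral_mono_set hpmom
        · exact (ae_restrict_iff' measurableSet_Ioi).2 (Filter.Eventually.of_forall
            fun s hs => mul_nonneg (le_of_lt hs) (hpnn s))
        · exact HasSubset.Subset.eventuallyLE Ioc_subset_Ioi_self
      have hcoef : ε ^ 2 * L ^ 2 / (2 * ε ^ α) * M ≤ M / 2 * L ^ α := by
        rw [div_mul_eq_mul_div, div_le_iff₀ (by positivity)]
        nlinarith [hMnn, hεα, hLα]
      calc |∫ s in Ioc (0:ℝ) 1, f s| ≤ ∫ s in Ioc (0:ℝ) 1, |f s| := habs _ _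
        _ ≤ ε ^ 2 * L ^ 2 / (2 * ε ^ α) * ∫ s in Ioc (0:ℝ) 1, s * p s := step
        _ ≤ ε ^ 2 * L ^ 2 / (2 * ε ^ α) * M := mul_le_mul_of_nonneg_left step2 (by positivity)
        _ ≤ M / 2 * L ^ α := hcoef
        _ ≤ (M / 2 + 2) * L ^ α := by nlinarith [hLα]
    · have hone' := hone hu
      have hp01 : IntegrableOn p (Ioc (0:ℝ) 1) := hpInt.mono_set Ioc_subset_Ioi_self
      have step : (∫ s in Ioc (0:ℝ) 1, |f s|) ≤ 2 / ε ^ α * ∫ s in Ioc (0:ℝ) 1, p s := by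
        rw [← integral_const_mul]
        exact setIntegral_mono_on h01.abs (hp01.const_mul _) measurableSet_Ioc fun s _ => hfle2 s
      have step2 : (∫ s in Ioc (0:ℝ) 1, p s) ≤ 1 := by
        rw [← hpint]
        apply setIntegral_mono_set hpInt
        · exact Filter.Eventually.of_forall fun s => hpnn s
        · exact HasSubset.Subset.eventuallyLE Ioc_subset_Ioi_self
      have hcoef : 2 / ε ^ α ≤ 2 * L ^ α := by
        rw [div_le_iff₀ hεα]
        nlinarith [hone']
      calc |∫ s in Ioc (0:ℝ) 1, f s| ≤ ∫ s in Ioc (0:ℝ) 1, |f s| := habs _ _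
        _ ≤ 2 / ε ^ α * ∫ s in Ioc (0:ℝ) 1, p s := step
        _ ≤ 2 / ε ^ α * 1 := mul_le_mul_of_nonneg_left step2 (by positivity)
        _ = 2 / ε ^ α := mul_one _
        _ ≤ 2 * L ^ α := hcoef
        _ ≤ (M / 2 + 2) * L ^ α := by nlinarith [hLα]
  -- facts about the tail density
  have hfs : ∀ s ∈ Ioi (1:ℝ), |f s| = d₀ / s ^ (α+1) * |Real.cos (ε * b * s) - 1| / ε ^ α := by
    intro s hs
    rw [hfabs s, htail s hs]
  have hrw : ∀ s ∈ Ioi (1:ℝ), d₀ / s ^ (α+1) * 2 / ε ^ α = 2 * d₀ / ε ^ α * s ^ (-(α+1)) := by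
    intro s hs
    have hs0 : (0:ℝ) < s := lt_trans one_pos hs
    rw [Real.rpow_neg hs0.le]
    have hsp : (0:ℝ) < s ^ (α+1) := Real.rpow_pos_of_pos hs0 _
    field_simp
  have hpt2 : ∀ s ∈ Ioi (1:ℝ), |f s| ≤ 2 * d₀ / ε ^ α * s ^ (-(α+1)) := by
    intro s hs
    rw [hfs s hs, ← hrw s hs]
    have hs0 : (0:ℝ) < s := lt_trans one_pos hs
    have hdnn : 0 ≤ d₀ / s ^ (α+1) := div_nonneg hd₀.le (Real.rpow_pos_of_pos hs0 _).le
    gcongr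
    exact my_cos_le_two _
  have htint : ∀ c : ℝ, 1 ≤ c → IntegrableOn (fun s : ℝ => s ^ (-(α+1))) (Ioi c) :=
    fun c hc => integrableOn_Ioi_rpow_of_lt (by linarith) (lt_of_lt_of_le one_pos hc)
  have htval : ∀ c : ℝ, 0 < c → (∫ s in Ioi c, s ^ (-(α+1))) = c ^ (-α) / α := by
    intro c hc
    rw [integral_Ioi_rpow_of_lt (by linarith) hc]
    rw [show -(α+1)+1 = -α by ring]
    field_simp
  have hJ2 : |∫ s in Ioi (1:ℝ), f s| ≤ (2 * d₀ / α + d₀ / (2 * (2-α))) * L ^ α := by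
    have hαpos : (0:ℝ) < α := by linarith
    have h2α : (0:ℝ) < 2 - α := by linarith
    rcases le_or_gt 1 (ε * L) with hu | hu
    · -- large frequency: crude bound
      have hone' : (1:ℝ) ≤ ε ^ α * L ^ α := by
        rw [← Real.mul_rpow hε.le hL.le]
        calc (1:ℝ) = 1 ^ α := (Real.one_rpow α).symm
          _ ≤ (ε * L) ^ α := Real.rpow_le_rpow zero_le_one hu (by linarith)
      have step : (∫ s in Ioi (1:ℝ), |f s|) ≤ 2 * d₀ / ε ^ α * ∫ s in Ioi (1:ℝ), s ^ (-(α+1)) := by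
        rw [← integral_const_mul]
        exact setIntegral_mono_on h1i.abs ((htint 1 le_rfl).const_mul _) measurableSet_Ioi hpt2
      have hval : (∫ s in Ioi (1:ℝ), s ^ (-(α+1))) = 1 / α := by
        rw [htval 1 one_pos, Real.one_rpow]
      have hcoef : 2 * d₀ / ε ^ α * (1 / α) ≤ 2 * d₀ / α * L ^ α := by
        rw [div_mul_eq_mul_div, div_le_iff₀ hεα]
        have : 2 * d₀ / α * L ^ α * ε ^ α = 2 * d₀ / α * (ε ^ α * L ^ α) := by ring
        rw [this]
        have h1 : 2 * d₀ / α * 1 ≤ 2 * d₀ / α * (ε ^ α * L ^ α) :=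
          mul_le_mul_of_nonneg_left hone' (by positivity)
        have h0 : 2 * d₀ * (1 / α) = 2 * d₀ / α * 1 := by ring
        linarith
      calc |∫ s in Ioi (1:ℝ), f s| ≤ ∫ s in Ioi (1:ℝ), |f s| := habs _ _
        _ ≤ 2 * d₀ / ε ^ α * ∫ s in Ioi (1:ℝ), s ^ (-(α+1)) := step
        _ = 2 * d₀ / ε ^ α * (1 / α) := by rw [hval]
        _ ≤ 2 * d₀ / α * L ^ α := hcoef
        _ ≤ (2 * d₀ / α + d₀ / (2 * (2-α))) * L ^ α := by nlinarith [hLα, div_nonneg hd₀.le (by linarith : (0:ℝ) ≤ 2 * (2-α))]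
    · -- small frequency: split at T = (ε L)⁻¹
      set u : ℝ := ε * L with hu_def
      have hu0 : 0 < u := mul_pos hε hL
      set T : ℝ := u⁻¹ with hT_def
      have hT1 : 1 < T := by
        rw [hT_def, inv_eq_one_div]
        exact (one_lt_div hu0).2 hu
      have hT0 : (0:ℝ) < T := lt_trans one_pos hT1
      have huα : u ^ α = ε ^ α * L ^ α := Real.mul_rpow hε.le hL.le
      have hTα : T ^ (-α) = ε ^ α * L ^ α := by
        rw [hT_def, Real.inv_rpow hu0.le, Real.rpow_neg hu0.le, inv_inv, huα]
      have hu2 : u ^ (2:ℝ) = ε ^ 2 * L ^ 2 := by rw [Real.rpow_two]; ring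
      have hT2 : T ^ ((2:ℝ) - α) = ε ^ α * L ^ α / (ε ^ 2 * L ^ 2) := by
        have e1 : T ^ ((2:ℝ) - α) = u ^ (α - 2) := by
          rw [hT_def, Real.inv_rpow hu0.le, ← Real.rpow_neg hu0.le]
          congr 1
          ring
        rw [e1, show α - 2 = α - (2:ℝ) from rfl, Real.rpow_sub hu0, huα, hu2]
      have h1T : IntegrableOn f (Ioc 1 T) := h1i.mono_set Ioc_subset_Ioi_self
      have hTi : IntegrableOn f (Ioi T) := h1i.mono_set (Ioi_subset_Ioi hT1.le)
      have hsplit2 : (∫ s in Ioi (1:ℝ), f s) = (∫ s in Ioc (1:ℝ) T, f s) + ∫ s in Ioi T, f s := by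
        rw [← setIntegral_union (Ioc_disjoint_Ioi le_rfl) measurableSet_Ioi h1T hTi,
          Ioc_union_Ioi_eq_Ioi hT1.le]
      -- bound on (1, T]
      have hptA : ∀ s ∈ Ioc (1:ℝ) T, |f s| ≤ d₀ * ε ^ 2 * L ^ 2 / (2 * ε ^ α) * s ^ ((1:ℝ) - α) := by
        intro s hs
        obtain ⟨hs1, hsT⟩ := hs
        have hs0 : (0:ℝ) < s := lt_trans one_pos hs1
        have hspow : (0:ℝ) < s ^ (α + 1) := Real.rpow_pos_of_pos hs0 _
        have hb2 : b ^ 2 ≤ L ^ 2 := by nlinarith [sq_abs b, abs_nonneg b]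
        have hcb : |Real.cos (ε * b * s) - 1| ≤ ε ^ 2 * L ^ 2 * s ^ 2 / 2 := by
          refine le_trans (my_cos_le_sq _) ?_
          have h1 : b ^ 2 * s ^ 2 ≤ L ^ 2 * s ^ 2 := mul_le_mul_of_nonneg_right hb2 (sq_nonneg s)
          have h2 : ε ^ 2 * (b ^ 2 * s ^ 2) ≤ ε ^ 2 * (L ^ 2 * s ^ 2) :=
            mul_le_mul_of_nonneg_left h1 (sq_nonneg ε)
          nlinarith
        rw [hfs s hs1]
        have hs1α : s ^ ((1:ℝ) - α) = s ^ 2 / s ^ (α + 1) := by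
          rw [show ((1:ℝ) - α) = 2 - (α + 1) by ring, Real.rpow_sub hs0, Real.rpow_two]
        have hdnn : 0 ≤ d₀ / s ^ (α + 1) := div_nonneg hd₀.le hspow.le
        calc d₀ / s ^ (α+1) * |Real.cos (ε * b * s) - 1| / ε ^ α
            ≤ d₀ / s ^ (α+1) * (ε ^ 2 * L ^ 2 * s ^ 2 / 2) / ε ^ α := by gcongr
          _ = d₀ * ε ^ 2 * L ^ 2 / (2 * ε ^ α) * (s ^ 2 / s ^ (α+1)) := by field_simp
          _ = d₀ * ε ^ 2 * L ^ 2 / (2 * ε ^ α) * s ^ ((1:ℝ) - α) := by rw [hs1α]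
      have hintA : IntegrableOn (fun s : ℝ => s ^ ((1:ℝ) - α)) (Ioc 1 T) := by
        rw [← intervalIntegrable_iff_integrableOn_Ioc_of_le hT1.le]
        exact intervalIntegral.intervalIntegrable_rpow' (by linarith)
      have hvalA : (∫ s in Ioc (1:ℝ) T, s ^ ((1:ℝ) - α)) = (T ^ ((2:ℝ) - α) - 1) / (2 - α) := by
        rw [← intervalIntegral.integral_of_le hT1.le,
          integral_rpow (Or.inl (by linarith)), Real.one_rpow,
          show (1:ℝ) - α + 1 = 2 - α by ring]
      have hA : |∫ s in Ioc (1:ℝ) T, f s| ≤ d₀ / (2 * (2 - α)) * L ^ α := by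
        have step : (∫ s in Ioc (1:ℝ) T, |f s|) ≤
            d₀ * ε ^ 2 * L ^ 2 / (2 * ε ^ α) * ∫ s in Ioc (1:ℝ) T, s ^ ((1:ℝ) - α) := by
          rw [← integral_const_mul]
          exact setIntegral_mono_on h1T.abs (hintA.const_mul _) measurableSet_Ioc hptA
        have hfin : d₀ * ε ^ 2 * L ^ 2 / (2 * ε ^ α) * ((T ^ ((2:ℝ) - α) - 1) / (2 - α)) ≤
            d₀ / (2 * (2 - α)) * L ^ α := by
          have e2 : d₀ * ε ^ 2 * L ^ 2 / (2 * ε ^ α) * (T ^ ((2:ℝ) - α) / (2 - α)) =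
              d₀ / (2 * (2 - α)) * L ^ α := by
            rw [hT2]
            field_simp
          have hc0 : 0 ≤ d₀ * ε ^ 2 * L ^ 2 / (2 * ε ^ α) := by positivity
          have hmono : (T ^ ((2:ℝ) - α) - 1) / (2 - α) ≤ T ^ ((2:ℝ) - α) / (2 - α) := by
            gcongr <;> linarith
          calc d₀ * ε ^ 2 * L ^ 2 / (2 * ε ^ α) * ((T ^ ((2:ℝ) - α) - 1) / (2 - α))
              ≤ d₀ * ε ^ 2 * L ^ 2 / (2 * ε ^ α) * (T ^ ((2:ℝ) - α) / (2 - α)) :=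
                mul_le_mul_of_nonneg_left hmono hc0
            _ = d₀ / (2 * (2 - α)) * L ^ α := e2
        calc |∫ s in Ioc (1:ℝ) T, f s| ≤ ∫ s in Ioc (1:ℝ) T, |f s| := habs _ _
          _ ≤ d₀ * ε ^ 2 * L ^ 2 / (2 * ε ^ α) * ∫ s in Ioc (1:ℝ) T, s ^ ((1:ℝ) - α) := step
          _ = d₀ * ε ^ 2 * L ^ 2 / (2 * ε ^ α) * ((T ^ ((2:ℝ) - α) - 1) / (2 - α)) := by rw [hvalA]
          _ ≤ d₀ / (2 * (2 - α)) * L ^ α := hfin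
      -- bound on (T, ∞)
      have hB : |∫ s in Ioi T, f s| ≤ 2 * d₀ / α * L ^ α := by
        have hptB : ∀ s ∈ Ioi T, |f s| ≤ 2 * d₀ / ε ^ α * s ^ (-(α+1)) :=
          fun s hs => hpt2 s (lt_trans hT1 hs)
        have step : (∫ s in Ioi T, |f s|) ≤ 2 * d₀ / ε ^ α * ∫ s in Ioi T, s ^ (-(α+1)) := by
          rw [← integral_const_mul]
          exact setIntegral_mono_on hTi.abs ((htint T hT1.le).const_mul _) measurableSet_Ioi hptB
        have hval : (∫ s in Ioi T, s ^ (-(α+1))) = ε ^ α * L ^ α / α := by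
          rw [htval T hT0, hTα]
        have e3 : 2 * d₀ / ε ^ α * (ε ^ α * L ^ α / α) = 2 * d₀ / α * L ^ α := by
          field_simp
        calc |∫ s in Ioi T, f s| ≤ ∫ s in Ioi T, |f s| := habs _ _
          _ ≤ 2 * d₀ / ε ^ α * ∫ s in Ioi T, s ^ (-(α+1)) := step
          _ = 2 * d₀ / ε ^ α * (ε ^ α * L ^ α / α) := by rw [hval]
          _ = 2 * d₀ / α * L ^ α := e3
      calc |∫ s in Ioi (1:ℝ), f s| = |(∫ s in Ioc (1:ℝ) T, f s) + ∫ s in Ioi T, f s| := by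
            rw [hsplit2]
        _ ≤ |∫ s in Ioc (1:ℝ) T, f s| + |∫ s in Ioi T, f s| := abs_add_le _ _
        _ ≤ d₀ / (2 * (2 - α)) * L ^ α + 2 * d₀ / α * L ^ α := add_le_add hA hB
        _ = (2 * d₀ / α + d₀ / (2 * (2 - α))) * L ^ α := by ring
  -- assemble
  have hsplit : (∫ s in Ioi (0:ℝ), f s) = (∫ s in Ioc (0:ℝ) 1, f s) + ∫ s in Ioi (1:ℝ), f s := by
    rw [← setIntegral_union (Ioc_disjoint_Ioi le_rfl) measurableSet_Ioi h01 h1i,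
      Ioc_union_Ioi_eq_Ioi zero_le_one]
  calc |∫ s in Ioi (0:ℝ), f s| = |(∫ s in Ioc (0:ℝ) 1, f s) + ∫ s in Ioi (1:ℝ), f s| := by
        rw [hsplit]
    _ ≤ |∫ s in Ioc (0:ℝ) 1, f s| + |∫ s in Ioi (1:ℝ), f s| := abs_add_le _ _
    _ ≤ (M / 2 + 2) * L ^ α + (2 * d₀ / α + d₀ / (2 * (2 - α))) * L ^ α := add_le_add hJ1 hJ2
    _ = (M / 2 + 2 + (2 * d₀ / α + d₀ / (2 * (2 - α)))) * L ^ α := by ring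



lemma my_abs_integral {X : Type*} [MeasurableSpace X] (μ : Measure X) (g : X → ℝ) :
    |∫ x, g x ∂μ| ≤ ∫ x, |g x| ∂μ := by
  simpa [Real.norm_eq_abs] using norm_integral_le_integral_norm (μ := μ) g

set_option maxHeartbeats 1000000 in
/-- Proposition 4.5 (b1): uniform bound `|Λ_ε| ≤ c₀ |ξ|^α` in the
heavy-tail case `1 < α < 2`, `θ(ε) = ε^α`. -/
theorem lambda_bound_heavy_tail
    (n : ℕ) (hn : 2 ≤ n) (α : ℝ) (hα : 1 < α ∧ α < 2)
    (κ : ℝ → ℝ) (hκ : IsAngularKernel n κ)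
    (p : ℝ → ℝ) (hp : IsPathDensity p)
    (d₀ : ℝ) (hd₀ : 0 < d₀) (htail : HasTailExponent p α d₀) :
    ∃ c₀ : ℝ, 0 < c₀ ∧
      ∀ ε ∈ Set.Ioo (0 : ℝ) 1, ∀ ξ : Euc n, ∀ v' : Sph n,
        |∫ v : Sph n, ∫ s in Set.Ioi (0 : ℝ),
            κ (inner ℝ (v' : Euc n) (v : Euc n)) * p s *
              (Real.cos (ε * inner ℝ (v : Euc n) ξ * s) - 1) / ε ^ α ∂volume ∂(sphμ n)| ≤
          c₀ * ‖ξ‖ ^ α := by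
  obtain ⟨hα1, hα2⟩ := hα
  obtain ⟨hκm, hκnn, hκint⟩ := hκ
  have hαpos : (0:ℝ) < α := lt_trans one_pos hα1
  have h2α : (0:ℝ) < 2 - α := by linarith
  set M : ℝ := ∫ s in Ioi (0:ℝ), s * p s with hM_def
  have hMnn : 0 ≤ M :=
    setIntegral_nonneg measurableSet_Ioi fun s hs => mul_nonneg (le_of_lt hs) (hp.2.1 s)
  set C : ℝ := M / 2 + 2 + (2 * d₀ / α + d₀ / (2 * (2 - α))) with hC_def
  have hC : 0 < C := by
    have h1 : 0 < 2 * d₀ / α := by positivity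
    have h2 : 0 < d₀ / (2 * (2 - α)) := by positivity
    have : (0:ℝ) < 2 := two_pos
    rw [hC_def]
    linarith
  refine ⟨C, hC, ?_⟩
  rintro ε ⟨hε0, hε1⟩ ξ v'
  by_cases hξ : ξ = 0
  · subst hξ
    simp only [inner_zero_right, mul_zero, zero_mul, Real.cos_zero, sub_self,
      zero_div, integral_zero, abs_zero, norm_zero]
    rw [Real.zero_rpow (ne_of_gt hαpos), mul_zero]
  · have hL : 0 < ‖ξ‖ := norm_pos_iff.2 hξ
    have hκInt : Integrable (fun v : Sph n => κ (inner ℝ (v : Euc n) (v' : Euc n))) (sphμ n) := by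
      by_contra h
      have := hκint v'
      rw [integral_undef h] at this
      norm_num at this
    have hκpos : ∀ v : Sph n, 0 ≤ κ (inner ℝ (v : Euc n) (v' : Euc n)) := by
      intro v
      apply hκnn
      have hv : ‖(v : Euc n)‖ = 1 := mem_sphere_zero_iff_norm.mp v.2
      have hv' : ‖(v' : Euc n)‖ = 1 := mem_sphere_zero_iff_norm.mp v'.2
      have := abs_real_inner_le_norm (v : Euc n) (v' : Euc n)
      rw [hv, hv', mul_one] at this
      exact abs_le.mp this
    have hJ : ∀ v : Sph n,
        |∫ s in Ioi (0:ℝ), p s * (Real.cos (ε * inner ℝ (v : Euc n) ξ * s) - 1) / ε ^ α| ≤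
          C * ‖ξ‖ ^ α := by
      intro v
      apply J_bound α d₀ hα1 hα2 hd₀ p ⟨hp.1, hp.2.1, hp.2.2.1, hp.2.2.2⟩ htail ε _ _ hε0 hε1 _ hL
      have hv : ‖(v : Euc n)‖ = 1 := mem_sphere_zero_iff_norm.mp v.2
      have := abs_real_inner_le_norm (v : Euc n) ξ
      rwa [hv, one_mul] at this
    have hre : ∀ v : Sph n,
        (∫ s in Ioi (0:ℝ), κ (inner ℝ (v' : Euc n) (v : Euc n)) * p s *
            (Real.cos (ε * inner ℝ (v : Euc n) ξ * s) - 1) / ε ^ α) =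
          κ (inner ℝ (v : Euc n) (v' : Euc n)) *
            ∫ s in Ioi (0:ℝ), p s * (Real.cos (ε * inner ℝ (v : Euc n) ξ * s) - 1) / ε ^ α := by
      intro v
      rw [real_inner_comm (v' : Euc n) (v : Euc n), ← integral_const_mul]
      congr 1
      funext s
      ring
    have houter : |∫ v : Sph n, κ (inner ℝ (v : Euc n) (v' : Euc n)) *
          (∫ s in Ioi (0:ℝ), p s * (Real.cos (ε * inner ℝ (v : Euc n) ξ * s) - 1) / ε ^ α)
          ∂(sphμ n)| ≤ C * ‖ξ‖ ^ α := by
      have h1 : |∫ v : Sph n, κ (inner ℝ (v : Euc n) (v' : Euc n)) *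
            (∫ s in Ioi (0:ℝ), p s * (Real.cos (ε * inner ℝ (v : Euc n) ξ * s) - 1) / ε ^ α)
            ∂(sphμ n)| ≤ ∫ v : Sph n, |κ (inner ℝ (v : Euc n) (v' : Euc n)) *
            (∫ s in Ioi (0:ℝ), p s * (Real.cos (ε * inner ℝ (v : Euc n) ξ * s) - 1) / ε ^ α)|
            ∂(sphμ n) :=
        my_abs_integral (sphμ n) _
      have h2 : (∫ v : Sph n, |κ (inner ℝ (v : Euc n) (v' : Euc n)) *
            (∫ s in Ioi (0:ℝ), p s * (Real.cos (ε * inner ℝ (v : Euc n) ξ * s) - 1) / ε ^ α)|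
            ∂(sphμ n)) ≤
          ∫ v : Sph n, κ (inner ℝ (v : Euc n) (v' : Euc n)) * (C * ‖ξ‖ ^ α) ∂(sphμ n) := by
        apply integral_mono_of_nonneg (Filter.Eventually.of_forall fun v => abs_nonneg _)
          (hκInt.mul_const _)
        apply Filter.Eventually.of_forall
        intro v
        dsimp only
        rw [abs_mul, abs_of_nonneg (hκpos v)]
        exact mul_le_mul_of_nonneg_left (hJ v) (hκpos v)
      have h3 : (∫ v : Sph n, κ (inner ℝ (v : Euc n) (v' : Euc n)) * (C * ‖ξ‖ ^ α) ∂(sphμ n)) =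
          C * ‖ξ‖ ^ α := by
        rw [integral_mul_const, hκint v', one_mul]
      exact h1.trans (h2.trans (le_of_eq h3))
    calc |∫ v : Sph n, ∫ s in Set.Ioi (0 : ℝ),
            κ (inner ℝ (v' : Euc n) (v : Euc n)) * p s *
              (Real.cos (ε * inner ℝ (v : Euc n) ξ * s) - 1) / ε ^ α ∂volume ∂(sphμ n)|
        = |∫ v : Sph n, κ (inner ℝ (v : Euc n) (v' : Euc n)) *
            (∫ s in Ioi (0:ℝ), p s * (Real.cos (ε * inner ℝ (v : Euc n) ξ * s) - 1) / ε ^ α)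
            ∂(sphμ n)| := by
          congr 1
          exact integral_congr_ae (Filter.Eventually.of_forall fun v => hre v)
      _ ≤ C * ‖ξ‖ ^ α := houter
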